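/- Let k be an uncountable field and a ∈ k[[u,v]] a formal power series. Suppose that for every polynomial f ∈ k[u,v] with f(0,0) = 0 there exists a polynomial b ∈ k[u,v] such that a ≡ b modulo the ideal generated by f in k[[u,v]]. Then a ∈ k[u,v], i.e., a is a polynomial. -/

import Mathlib

open Finset MvPowerSeries

namespace PolyCongAux

variable {k : Type*} [Field k]

/-- The exponent finsupp `(i, j)` on `Fin 2`. -/
noncomputable def D (i j : ℕ) : Fin 2 →₀ ℕ :=
  Finsupp.single 0 i + Finsupp.single 1 j

lemma D_apply0 (i j : ℕ) : D i j 0 = i := by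
  simp [D, Finsupp.single_apply]

lemma D_apply1 (i j : ℕ) : D i j 1 = j := by
  simp [D, Finsupp.single_apply]

lemma D_zero : D 0 0 = 0 := by simp [D]

lemma D_succ_left (i j : ℕ) : D (i + 1) j = D i j + Finsupp.single 0 1 := by
  simp only [D, Finsupp.single_add]
  abel

lemma D_succ_right (i j : ℕ) : D i (j + 1) = D i j + Finsupp.single 1 1 := by
  simp only [D, Finsupp.single_add]
  abel

lemma D_eq_self (d : Fin 2 →₀ ℕ) : D (d 0) (d 1) = d := by
  ext s
  fin_cases s
  · show D (d 0) (d 1) 0 = d 0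
    rw [D_apply0]
  · show D (d 0) (d 1) 1 = d 1
    rw [D_apply1]

lemma D_degree_sum (i j : ℕ) : ∑ v ∈ (D i j).support, (D i j) v = i + j := by
  have h : ∑ v ∈ (D i j).support, (D i j) v = ∑ v : Fin 2, (D i j) v :=
    Finset.sum_subset (Finset.subset_univ _)
      (fun x _ hx => Finsupp.notMem_support_iff.mp hx)
  rw [h, Fin.sum_univ_two, D_apply0, D_apply1]

lemma coeff_mul_X_eq_zero (g : MvPowerSeries (Fin 2) k) {d : Fin 2 →₀ ℕ} {s : Fin 2}
    (hd : d s = 0) : MvPowerSeries.coeff d (g * X s) = 0 := by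
  classical
  rw [X_def, coeff_mul_monomial, if_neg]
  intro hle
  have h1 : (1 : ℕ) ≤ d s := Finsupp.single_le_iff.mp hle
  omega

lemma coeff_mul_X_add (g : MvPowerSeries (Fin 2) k) (d : Fin 2 →₀ ℕ) (s : Fin 2) :
    MvPowerSeries.coeff (d + Finsupp.single s 1) (g * X s) = MvPowerSeries.coeff d g := by
  rw [X_def, coeff_add_mul_monomial, mul_one]

/-- The diagonal sums of a multiple of `X 0 - c • X 1` all vanish. -/
lemma sum_coeff_mul_eq_zero (g : MvPowerSeries (Fin 2) k) (c : k) (n : ℕ) :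
    ∑ p ∈ antidiagonal n,
      MvPowerSeries.coeff (D p.1 p.2)
        (g * ((X 0 : MvPowerSeries (Fin 2) k) - C c * X 1)) * c ^ p.1 = 0 := by
  have hg : g * ((X 0 : MvPowerSeries (Fin 2) k) - C c * X 1)
      = g * X 0 - C c * (g * X 1) := by ring
  rw [hg]
  simp only [map_sub, coeff_C_mul, sub_mul, Finset.sum_sub_distrib]
  cases n with
  | zero =>
      simp [D_zero, coeff_zero_mul_X]
  | succ n =>
      have hA : ∑ p ∈ antidiagonal (n + 1),
          MvPowerSeries.coeff (D p.1 p.2) (g * X 0) * c ^ p.1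
          = ∑ p ∈ antidiagonal n, MvPowerSeries.coeff (D p.1 p.2) g * c ^ (p.1 + 1) := by
        rw [Finset.Nat.antidiagonal_succ, Finset.sum_cons, Finset.sum_map,
          coeff_mul_X_eq_zero g (by rw [D_apply0]), zero_mul, zero_add]
        refine Finset.sum_congr rfl fun p _ => ?_
        simp only [Function.Embedding.coe_prodMap, Function.Embedding.coeFn_mk,
          Function.Embedding.refl_apply, Prod.map_fst, Prod.map_snd, Nat.succ_eq_add_one]
        rw [D_succ_left, coeff_mul_X_add]
      have hB : ∑ p ∈ antidiagonal (n + 1),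
          c * MvPowerSeries.coeff (D p.1 p.2) (g * X 1) * c ^ p.1
          = ∑ p ∈ antidiagonal n, c * MvPowerSeries.coeff (D p.1 p.2) g * c ^ p.1 := by
        rw [Finset.Nat.antidiagonal_succ', Finset.sum_cons, Finset.sum_map,
          coeff_mul_X_eq_zero g (by rw [D_apply1]), mul_zero, zero_mul, zero_add]
        refine Finset.sum_congr rfl fun p _ => ?_
        simp only [Function.Embedding.coe_prodMap, Function.Embedding.coeFn_mk,
          Function.Embedding.refl_apply, Prod.map_fst, Prod.map_snd, Nat.succ_eq_add_one]
        rw [D_succ_right, coeff_mul_X_add]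
      rw [hA, hB, sub_eq_zero]
      exact Finset.sum_congr rfl fun p _ => by ring

/-- The diagonal sums of a polynomial vanish beyond its total degree. -/
lemma sum_coeff_poly_eq_zero (b : MvPolynomial (Fin 2) k) (c : k) {n : ℕ}
    (hn : b.totalDegree < n) :
    ∑ p ∈ antidiagonal n,
      MvPowerSeries.coeff (D p.1 p.2) (b : MvPowerSeries (Fin 2) k) * c ^ p.1 = 0 := by
  refine Finset.sum_eq_zero fun p hp => ?_
  have hpn := Finset.HasAntidiagonal.mem_antidiagonal.mp hp
  have hd : b.totalDegree < ∑ v ∈ (D p.1 p.2).support, (D p.1 p.2) v := by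
    rw [D_degree_sum]; omega
  rw [MvPolynomial.coeff_coe, MvPolynomial.coeff_eq_zero_of_totalDegree_lt hd, zero_mul]

end PolyCongAux

open PolyCongAux

/-- Let `k` be an uncountable field and `a ∈ k[[u,v]]` a formal power series.
Suppose that for every polynomial `f ∈ k[u,v]` with `f(0,0) = 0` there is a
polynomial `b ∈ k[u,v]` with `a ≡ b` modulo the ideal generated by `f` in
`k[[u,v]]`. Then `a` is a polynomial. -/
theorem polynomial_of_congruent_to_polynomial_mod_every_f
    {k : Type*} [Field k] [Uncountable k] (a : MvPowerSeries (Fin 2) k)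
    (h : ∀ f : MvPolynomial (Fin 2) k, MvPolynomial.constantCoeff f = 0 →
      ∃ b : MvPolynomial (Fin 2) k,
        a - (b : MvPowerSeries (Fin 2) k) ∈
          Ideal.span {(f : MvPowerSeries (Fin 2) k)}) :
    ∃ p : MvPolynomial (Fin 2) k, a = (p : MvPowerSeries (Fin 2) k) := by
  classical
  -- Step 1: for each `c : k` the diagonal sums of `a` at `c` eventually vanish.
  have hmain : ∀ c : k, ∃ N : ℕ, ∀ n, N < n →
      ∑ p ∈ Finset.HasAntidiagonal.antidiagonal n, MvPowerSeries.coeff (D p.1 p.2) a * c ^ p.1 = 0 := by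
    intro c
    obtain ⟨b, hb⟩ := h (MvPolynomial.X 0 - MvPolynomial.C c * MvPolynomial.X 1) (by simp)
    obtain ⟨g, hg⟩ := Ideal.mem_span_singleton'.mp hb
    refine ⟨b.totalDegree, fun n hn => ?_⟩
    have hf : ((MvPolynomial.X 0 - MvPolynomial.C c * MvPolynomial.X 1 :
        MvPolynomial (Fin 2) k) : MvPowerSeries (Fin 2) k)
        = (MvPowerSeries.X 0 : MvPowerSeries (Fin 2) k)
          - MvPowerSeries.C c * MvPowerSeries.X 1 := by
      rw [← MvPolynomial.coeToMvPowerSeries.ringHom_apply, map_sub, map_mul]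
      simp only [MvPolynomial.coeToMvPowerSeries.ringHom_apply, MvPolynomial.coe_X,
        MvPolynomial.coe_C]
    have ha : a = g * ((MvPowerSeries.X 0 : MvPowerSeries (Fin 2) k)
        - MvPowerSeries.C c * MvPowerSeries.X 1) + (b : MvPowerSeries (Fin 2) k) := by
      rw [← hf]
      have := hg.symm
      linear_combination this
    calc ∑ p ∈ Finset.HasAntidiagonal.antidiagonal n, MvPowerSeries.coeff (D p.1 p.2) a * c ^ p.1
        = (∑ p ∈ Finset.HasAntidiagonal.antidiagonal n,
            MvPowerSeries.coeff (D p.1 p.2)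
              (g * ((MvPowerSeries.X 0 : MvPowerSeries (Fin 2) k)
                - MvPowerSeries.C c * MvPowerSeries.X 1)) * c ^ p.1)
          + ∑ p ∈ Finset.HasAntidiagonal.antidiagonal n,
              MvPowerSeries.coeff (D p.1 p.2) (b : MvPowerSeries (Fin 2) k) * c ^ p.1 := by
          rw [← Finset.sum_add_distrib]
          refine Finset.sum_congr rfl fun p _ => ?_
          rw [ha]
          rw [map_add, add_mul]
      _ = 0 := by
          rw [sum_coeff_mul_eq_zero g c n, sum_coeff_poly_eq_zero b c hn, add_zero]
  choose N hN using hmain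
  -- Step 2: some fiber of `N` is infinite.
  obtain ⟨n₀, hn₀⟩ : ∃ n₀ : ℕ, {c : k | N c = n₀}.Infinite := by
    by_contra hcon
    push_neg at hcon
    have hcount : (Set.univ : Set k).Countable := by
      have huniv : (Set.univ : Set k) = ⋃ n, {c : k | N c = n} := by
        ext c; simp
      rw [huniv]
      exact Set.countable_iUnion fun n => (hcon n).countable
    exact not_countable (Set.countable_univ_iff.mp hcount)
  -- Step 3: all coefficients of `a` of total degree `> n₀` vanish.
  have hvanish : ∀ d : Fin 2 →₀ ℕ, n₀ < d 0 + d 1 → MvPowerSeries.coeff d a = 0 := by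
    intro d hd
    set n := d 0 + d 1 with hn
    set P : Polynomial k := ∑ p ∈ Finset.HasAntidiagonal.antidiagonal n,
      Polynomial.C (MvPowerSeries.coeff (D p.1 p.2) a) * Polynomial.X ^ p.1 with hP
    have hroot : {c : k | N c = n₀} ⊆ {c : k | P.IsRoot c} := by
      intro c hc
      have hc' : N c = n₀ := hc
      have hzero := hN c n (by omega)
      simp only [Set.mem_setOf_eq, Polynomial.IsRoot, hP, Polynomial.eval_finset_sum,
        Polynomial.eval_mul, Polynomial.eval_C, Polynomial.eval_pow, Polynomial.eval_X]
      exact hzero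
    have hP0 : P = 0 := Polynomial.eq_zero_of_infinite_isRoot P (hn₀.mono hroot)
    have hcoeff : P.coeff (d 0) = MvPowerSeries.coeff d a := by
      rw [hP, Polynomial.finset_sum_coeff]
      rw [Finset.sum_eq_single (d 0, d 1)]
      · simp [Polynomial.coeff_C_mul, Polynomial.coeff_X_pow, D_eq_self]
      · intro p hp hne
        have hpn := Finset.HasAntidiagonal.mem_antidiagonal.mp hp
        have hne1 : d 0 ≠ p.1 := by
          intro hfoo
          apply hne
          have h2 : p.2 = d 1 := by omega
          exact Prod.ext hfoo.symm h2
        simp [Polynomial.coeff_C_mul, Polynomial.coeff_X_pow, hne1]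
      · intro habs
        exact absurd (Finset.HasAntidiagonal.mem_antidiagonal.mpr hn.symm) habs
    rw [← hcoeff, hP0, Polynomial.coeff_zero]
  -- Step 4: `a` equals its truncation.
  refine ⟨MvPowerSeries.trunc k (D (n₀ + 1) (n₀ + 1)) a, ?_⟩
  apply MvPowerSeries.ext
  intro d
  rw [MvPolynomial.coeff_coe, MvPowerSeries.coeff_trunc]
  split_ifs with hlt
  · rfl
  · by_cases hdeg : n₀ < d 0 + d 1
    · exact hvanish d hdeg
    · exfalso
      apply hlt
      have hdeg' : d 0 + d 1 ≤ n₀ := not_lt.mp hdeg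
      have hle : d ≤ D (n₀ + 1) (n₀ + 1) := by
        rw [Finsupp.le_iff]
        intro s _
        fin_cases s
        · show d 0 ≤ D (n₀ + 1) (n₀ + 1) 0
          rw [D_apply0]; omega
        · show d 1 ≤ D (n₀ + 1) (n₀ + 1) 1
          rw [D_apply1]; omega
      refine lt_of_le_of_ne hle ?_
      intro heq
      have h0 : d 0 = n₀ + 1 := by rw [heq, D_apply0]
      omega
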